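/- (Consistency of the closed-form solutions) Let L > 0, 0 < a < b < L and P > 0. For each integer N ≥ 2 set Δs = (b − a)/(N − 1), s_i = a + (i − 1)Δs for i = 1, …, N, and define u₁^{(N)}(x) = P Δs Σ_{i=1}^{N} (1/2)[ (x/L − 1) erf(s_i/(√2 Δs)) + (x/L) erf((L − s_i)/(√2 Δs)) − erf((x − s_i)/(√2 Δs)) ]. Define u₂(x) = P(G(x, a) − G(x, b)) with G(x, x′) = (1 − x′/L)x − max(x − x′, 0). Then for every x ∈ (0, L) with x ≠ a and x ≠ b, lim_{N→∞} u₁^{(N)}(x) = u₂(x). -/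

import Mathlib

/-- The error function `erf x = (2/√π) ∫₀ˣ exp(−t²) dt`. -/
noncomputable def erf (x : ℝ) : ℝ :=
  (2 / Real.sqrt Real.pi) * ∫ t in (0 : ℝ)..x, Real.exp (-t ^ 2)

/-- The closed-form SPH solution with `N` cells placed uniformly in `(a, b)`:
`u₁^{(N)}(x) = P Δs Σ_{i=1}^{N} (1/2)[(x/L − 1) erf(sᵢ/(√2 Δs)) + (x/L) erf((L − sᵢ)/(√2 Δs))
− erf((x − sᵢ)/(√2 Δs))]` with `Δs = (b − a)/(N − 1)` and `sᵢ = a + (i − 1)Δs`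
(encoded via `i ∈ Finset.range N`). -/
noncomputable def u1SPH (L a b P : ℝ) (N : ℕ) (x : ℝ) : ℝ :=
  P * ((b - a) / ((N : ℝ) - 1)) * ∑ i ∈ Finset.range N, (1 / 2 : ℝ) *
    ((x / L - 1) * erf ((a + (i : ℝ) * ((b - a) / ((N : ℝ) - 1))) /
        (Real.sqrt 2 * ((b - a) / ((N : ℝ) - 1))))
      + (x / L) * erf ((L - (a + (i : ℝ) * ((b - a) / ((N : ℝ) - 1)))) /
        (Real.sqrt 2 * ((b - a) / ((N : ℝ) - 1))))
      - erf ((x - (a + (i : ℝ) * ((b - a) / ((N : ℝ) - 1)))) /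
        (Real.sqrt 2 * ((b - a) / ((N : ℝ) - 1)))))

/-- The Green's function `G(x, x′) = (1 − x′/L) x − max(x − x′, 0)` of `−d²/dx²` on
`(0, L)` with homogeneous Dirichlet boundary conditions. -/
noncomputable def greenG (L x x' : ℝ) : ℝ :=
  (1 - x' / L) * x - max (x - x') 0

open MeasureTheory Real Filter Topology intervalIntegral

lemma integrable_gauss : Integrable (fun u : ℝ => Real.exp (-u ^ 2)) := by
  simpa using integrable_exp_neg_mul_sq (b := 1) one_pos

lemma erf_mono : Monotone erf := by
  intro t1 t2 h
  unfold erf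
  have key : (∫ t in (0:ℝ)..t1, Real.exp (-t ^ 2)) + (∫ t in t1..t2, Real.exp (-t ^ 2))
      = ∫ t in (0:ℝ)..t2, Real.exp (-t ^ 2) :=
    integral_add_adjacent_intervals integrable_gauss.intervalIntegrable
      integrable_gauss.intervalIntegrable
  have h2 : 0 ≤ ∫ t in t1..t2, Real.exp (-t ^ 2) :=
    intervalIntegral.integral_nonneg h (fun u _ => (Real.exp_nonneg _))
  have hc : 0 ≤ 2 / Real.sqrt Real.pi := by positivity
  nlinarith [key, h2, hc]

lemma tendsto_erf_atTop : Tendsto erf atTop (𝓝 1) := by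
  have h1 : Tendsto (fun t : ℝ => ∫ u in (0:ℝ)..t, Real.exp (-u ^ 2)) atTop
      (𝓝 (∫ u in Set.Ioi (0:ℝ), Real.exp (-u ^ 2))) :=
    intervalIntegral_tendsto_integral_Ioi 0 integrable_gauss.integrableOn tendsto_id
  have h2 : (∫ u in Set.Ioi (0:ℝ), Real.exp (-u ^ 2)) = Real.sqrt π / 2 := by
    have := integral_gaussian_Ioi 1
    simpa using this
  rw [h2] at h1
  have := h1.const_mul (2 / Real.sqrt π)
  have hπ : Real.sqrt π ≠ 0 := by positivity
  convert this using 2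
  · rfl
  · field_simp

lemma erf_neg (t : ℝ) : erf (-t) = - erf t := by
  unfold erf
  have : (∫ u in (0:ℝ)..(-t), Real.exp (-u ^ 2)) = - ∫ u in (0:ℝ)..t, Real.exp (-u ^ 2) := by
    have h := intervalIntegral.integral_comp_neg (a := (0:ℝ)) (b := t)
      (f := fun u => Real.exp (-u ^ 2))
    simp only [neg_neg, neg_zero] at h
    rw [intervalIntegral.integral_symm, ← h]
    simp [neg_neg]
  rw [this]; ring

lemma erf_le_one (t : ℝ) : erf t ≤ 1 := erf_mono.ge_of_tendsto tendsto_erf_atTop t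

lemma neg_one_le_erf (t : ℝ) : -1 ≤ erf t := by
  have := erf_le_one (-t); rw [erf_neg] at this; linarith

lemma tendsto_erf_atBot : Tendsto erf atBot (𝓝 (-1)) := by
  have h : Tendsto (fun t : ℝ => - erf (-t)) atBot (𝓝 (-1)) :=
    ((tendsto_erf_atTop.comp tendsto_neg_atBot_atTop)).neg
  refine h.congr fun t => by rw [erf_neg, neg_neg]

section
variable {a b : ℝ}

lemma tendsto_sub_one_atTop : Tendsto (fun N : ℕ => (N:ℝ) - 1) atTop atTop := by
  have h := tendsto_atTop_add_const_right atTop (-1 : ℝ) tendsto_natCast_atTop_atTop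
  refine h.congr fun n => by ring

lemma lim_d (hab : a < b) : Tendsto (fun N : ℕ => (b - a)/((N:ℝ)-1)) atTop (𝓝 0) := by
  have h := tendsto_sub_one_atTop.inv_tendsto_atTop.const_mul (b - a)
  simpa [div_eq_mul_inv, mul_zero] using h

lemma lim_d_pos (hab : a < b) : ∀ᶠ N : ℕ in atTop, 0 < (b - a)/((N:ℝ)-1) := by
  filter_upwards [eventually_ge_atTop 2] with N hN
  have h1 : (1:ℝ) < (N:ℝ) := by exact_mod_cast Nat.lt_of_lt_of_le one_lt_two hN
  exact div_pos (by linarith) (by linarith)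

lemma lim_Nd (hab : a < b) :
    Tendsto (fun N : ℕ => (N:ℝ) * ((b - a)/((N:ℝ)-1))) atTop (𝓝 (b - a)) := by
  have h0 : Tendsto (fun N : ℕ => (b - a) + (b - a) * ((N:ℝ)-1)⁻¹) atTop (𝓝 (b - a)) := by
    have := (tendsto_sub_one_atTop.inv_tendsto_atTop.const_mul (b - a)).const_add (b - a)
    simpa using this
  refine h0.congr' ?_
  filter_upwards [eventually_ge_atTop 2] with N hN
  have h1 : ((N:ℝ) - 1) ≠ 0 := by
    have : (1:ℝ) < (N:ℝ) := by exact_mod_cast Nat.lt_of_lt_of_le one_lt_two hN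
    linarith
  field_simp
  ring

lemma lim_inv_d (hab : a < b) :
    Tendsto (fun N : ℕ => ((b - a)/((N:ℝ)-1))⁻¹) atTop atTop := by
  refine Tendsto.inv_tendsto_nhdsGT_zero (tendsto_nhdsWithin_iff.mpr ⟨lim_d hab, lim_d_pos hab⟩)

end

lemma lim_erf_arg (hab : a < b) {m : ℝ} (hm : 0 < m) :
    Tendsto (fun N : ℕ => erf (m / (Real.sqrt 2 * ((b - a)/((N:ℝ)-1))))) atTop (𝓝 1) := by
  refine tendsto_erf_atTop.comp ?_
  have h := (lim_inv_d hab).const_mul_atTop (show (0:ℝ) < m / Real.sqrt 2 by positivity)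
  refine h.congr fun N => ?_
  simp only [div_eq_mul_inv, mul_inv, mul_assoc]

lemma lim_A (hab : a < b) {m : ℝ} (hm : 0 < m) (f : ℕ → ℕ → ℝ)
    (hf : ∀ N, 2 ≤ N → ∀ i ∈ Finset.range N, m ≤ f N i) :
    Tendsto (fun N : ℕ => ((b - a)/((N:ℝ)-1)) *
        ∑ i ∈ Finset.range N, erf (f N i / (Real.sqrt 2 * ((b - a)/((N:ℝ)-1)))))
      atTop (𝓝 (b - a)) := by
  set d : ℕ → ℝ := fun N => (b - a)/((N:ℝ)-1) with hd
  have hlow : Tendsto (fun N : ℕ => ((N:ℝ) * d N) * erf (m / (Real.sqrt 2 * d N)))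
      atTop (𝓝 (b - a)) := by
    have := (lim_Nd hab).mul (lim_erf_arg hab hm)
    simpa using this
  refine tendsto_of_tendsto_of_tendsto_of_le_of_le' hlow (lim_Nd hab) ?_ ?_
  · filter_upwards [eventually_ge_atTop 2, lim_d_pos hab] with N hN hdN
    have hsum : ∑ i ∈ Finset.range N, erf (m / (Real.sqrt 2 * d N))
        ≤ ∑ i ∈ Finset.range N, erf (f N i / (Real.sqrt 2 * d N)) := by
      refine Finset.sum_le_sum fun i hi => erf_mono ?_
      have := hf N hN i hi
      gcongr
    rw [Finset.sum_const, Finset.card_range] at hsum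
    have := mul_le_mul_of_nonneg_left hsum (le_of_lt hdN)
    calc ((N:ℝ) * d N) * erf (m / (Real.sqrt 2 * d N))
        = d N * (N • erf (m / (Real.sqrt 2 * d N))) := by
          rw [nsmul_eq_mul]; ring
      _ ≤ _ := this
  · filter_upwards [eventually_ge_atTop 2, lim_d_pos hab] with N hN hdN
    have hsum : ∑ i ∈ Finset.range N, erf (f N i / (Real.sqrt 2 * d N))
        ≤ ∑ i ∈ Finset.range N, (1:ℝ) :=
      Finset.sum_le_sum fun i _ => erf_le_one _
    rw [Finset.sum_const, Finset.card_range] at hsum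
    have := mul_le_mul_of_nonneg_left hsum (le_of_lt hdN)
    calc d N * ∑ i ∈ Finset.range N, erf (f N i / (Real.sqrt 2 * d N))
        ≤ d N * (N • (1:ℝ)) := this
      _ = (N:ℝ) * d N := by rw [nsmul_eq_mul]; ring

section
variable {a b x : ℝ}

lemma count_bounds (hab : a < b) (hax : a < x) (hxb : x < b) :
    ∀ᶠ N : ℕ in atTop,
      (x - a) ≤ ((b - a)/((N:ℝ)-1)) *
        (((Finset.range N).filter (fun i : ℕ => (i:ℝ) * ((b - a)/((N:ℝ)-1)) < x - a)).card : ℝ) ∧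
      ((b - a)/((N:ℝ)-1)) *
        (((Finset.range N).filter (fun i : ℕ => (i:ℝ) * ((b - a)/((N:ℝ)-1)) < x - a)).card : ℝ)
        ≤ (x - a) + ((b - a)/((N:ℝ)-1)) ∧
      (x - a) ≤ ((b - a)/((N:ℝ)-1)) *
        (((Finset.range N).filter (fun i : ℕ => (i:ℝ) * ((b - a)/((N:ℝ)-1)) ≤ x - a)).card : ℝ) ∧
      ((b - a)/((N:ℝ)-1)) *
        (((Finset.range N).filter (fun i : ℕ => (i:ℝ) * ((b - a)/((N:ℝ)-1)) ≤ x - a)).card : ℝ)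
        ≤ (x - a) + ((b - a)/((N:ℝ)-1)) := by
  filter_upwards [eventually_ge_atTop 2, lim_d_pos hab] with N hN hdN
  set d := (b - a)/((N:ℝ)-1) with hdd
  set r := (x - a)/d with hrr
  have hN1 : (0:ℝ) < (N:ℝ) - 1 := by
    have : (1:ℝ) < (N:ℝ) := by exact_mod_cast Nat.lt_of_lt_of_le one_lt_two hN
    linarith
  have hNd : ((N:ℝ) - 1) * d = b - a := by
    rw [hdd]; field_simp
  have hr0 : 0 < r := div_pos (by linarith) hdN
  have hrN : r < (N:ℝ) - 1 := by
    rw [hrr, div_lt_iff₀ hdN, hNd]; linarith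
  have hrd : r * d = x - a := div_mul_cancel₀ _ (ne_of_gt hdN)
  have hceil : (⌈r⌉₊ : ℝ) < r + 1 := Nat.ceil_lt_add_one hr0.le
  -- lower subset: range ⌈r⌉₊ ⊆ both filters
  have hsub_low : ∀ i, i ∈ Finset.range ⌈r⌉₊ → i ∈ Finset.range N ∧ (i:ℝ) * d < x - a := by
    intro i hi
    rw [Finset.mem_range] at hi
    have h1 : (i:ℝ) + 1 ≤ (⌈r⌉₊ : ℝ) := by exact_mod_cast hi
    have h2 : (i:ℝ) < r := by linarith
    constructor
    · rw [Finset.mem_range]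
      have : (i:ℝ) < (N:ℝ) := by linarith
      exact_mod_cast this
    · calc (i:ℝ) * d < r * d := by exact mul_lt_mul_of_pos_right h2 hdN
        _ = x - a := hrd
  have hklow : ∀ p : ℕ → Prop, ∀ inst : DecidablePred p, (∀ i : ℕ, (i:ℝ) * d < x - a → p i) →
      r ≤ (((Finset.range N).filter p).card : ℝ) := by
    intro p inst hp
    have hsub : Finset.range ⌈r⌉₊ ⊆ (Finset.range N).filter p := by
      intro i hi
      rcases hsub_low i hi with ⟨h1, h2⟩
      exact Finset.mem_filter.mpr ⟨h1, hp i h2⟩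
    calc r ≤ (⌈r⌉₊ : ℝ) := Nat.le_ceil r
      _ = ((Finset.range ⌈r⌉₊).card : ℝ) := by rw [Finset.card_range]
      _ ≤ _ := by exact_mod_cast Finset.card_le_card hsub
  have hk1 : r ≤ (((Finset.range N).filter (fun i : ℕ => (i:ℝ) * d < x - a)).card : ℝ) :=
    hklow _ _ (fun i h => h)
  have hk1' : r ≤ (((Finset.range N).filter (fun i : ℕ => (i:ℝ) * d ≤ x - a)).card : ℝ) :=
    hklow _ _ (fun i h => le_of_lt h)
  have hk2 : (((Finset.range N).filter (fun i : ℕ => (i:ℝ) * d < x - a)).card : ℝ) ≤ r + 1 := by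
    have hsub : (Finset.range N).filter (fun i : ℕ => (i:ℝ) * d < x - a) ⊆ Finset.range ⌈r⌉₊ := by
      intro i hi
      rw [Finset.mem_filter] at hi
      rw [Finset.mem_range, Nat.lt_ceil]
      exact (lt_div_iff₀ hdN).mpr hi.2
    calc ((((Finset.range N).filter (fun i : ℕ => (i:ℝ) * d < x - a)).card : ℕ) : ℝ)
        ≤ ((Finset.range ⌈r⌉₊).card : ℝ) := by exact_mod_cast Finset.card_le_card hsub
      _ = (⌈r⌉₊ : ℝ) := by rw [Finset.card_range]
      _ ≤ r + 1 := hceil.le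
  have hk2' : (((Finset.range N).filter (fun i : ℕ => (i:ℝ) * d ≤ x - a)).card : ℝ) ≤ r + 1 := by
    have hsub : (Finset.range N).filter (fun i : ℕ => (i:ℝ) * d ≤ x - a) ⊆ Finset.range (⌊r⌋₊ + 1) := by
      intro i hi
      rw [Finset.mem_filter] at hi
      rw [Finset.mem_range, Nat.lt_succ_iff]
      exact Nat.le_floor ((le_div_iff₀ hdN).mpr hi.2)
    calc ((((Finset.range N).filter (fun i : ℕ => (i:ℝ) * d ≤ x - a)).card : ℕ) : ℝ)
        ≤ ((Finset.range (⌊r⌋₊ + 1)).card : ℝ) := by exact_mod_cast Finset.card_le_card hsub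
      _ = (⌊r⌋₊ : ℝ) + 1 := by rw [Finset.card_range]; push_cast; ring
      _ ≤ r + 1 := by have := Nat.floor_le hr0.le; linarith
  refine ⟨?_, ?_, ?_, ?_⟩
  · calc x - a = r * d := hrd.symm
      _ ≤ _ := by rw [mul_comm]; exact mul_le_mul_of_nonneg_left hk1 hdN.le
  · calc d * _ ≤ d * (r + 1) := mul_le_mul_of_nonneg_left hk2 hdN.le
      _ = x - a + d := by rw [mul_add, mul_comm d r, hrd]; ring
  · calc x - a = r * d := hrd.symm
      _ ≤ _ := by rw [mul_comm]; exact mul_le_mul_of_nonneg_left hk1' hdN.le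
  · calc d * _ ≤ d * (r + 1) := mul_le_mul_of_nonneg_left hk2' hdN.le
      _ = x - a + d := by rw [mul_add, mul_comm d r, hrd]; ring

end

section
variable {a b x : ℝ}

lemma lim_T (hab : a < b) (hax : a < x) (hxb : x < b) :
    Tendsto (fun N : ℕ => ((b - a)/((N:ℝ)-1)) *
      ((((Finset.range N).filter (fun i : ℕ => (i:ℝ) * ((b - a)/((N:ℝ)-1)) < x - a)).card : ℝ)
       + (((Finset.range N).filter (fun i : ℕ => (i:ℝ) * ((b - a)/((N:ℝ)-1)) ≤ x - a)).card : ℝ)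
       - (N:ℝ))) atTop (𝓝 (2*x - a - b)) := by
  have hlow : Tendsto (fun N : ℕ => 2*(x - a) - (N:ℝ) * ((b - a)/((N:ℝ)-1)))
      atTop (𝓝 (2*x - a - b)) := by
    have := (tendsto_const_nhds (x := 2*(x-a)) (f := atTop (α := ℕ))).sub (lim_Nd hab)
    convert this using 2; ring
  have hup : Tendsto (fun N : ℕ => 2*(x - a) + 2*((b - a)/((N:ℝ)-1))
      - (N:ℝ) * ((b - a)/((N:ℝ)-1))) atTop (𝓝 (2*x - a - b)) := by
    have := ((tendsto_const_nhds (x := 2*(x-a)) (f := atTop (α := ℕ))).add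
      ((lim_d hab).const_mul 2)).sub (lim_Nd hab)
    convert this using 2 <;> ring
  refine tendsto_of_tendsto_of_tendsto_of_le_of_le' hlow hup ?_ ?_
  · filter_upwards [count_bounds hab hax hxb] with N hc
    obtain ⟨h1, h2, h3, h4⟩ := hc
    nlinarith [h1, h3]
  · filter_upwards [count_bounds hab hax hxb] with N hc
    obtain ⟨h1, h2, h3, h4⟩ := hc
    nlinarith [h2, h4]

lemma card_filter_abs_lt (N : ℕ) (a x d ε : ℝ) (hd : 0 < d) (hε : 0 ≤ ε) :
    (((Finset.range N).filter (fun i : ℕ => |x - (a + (i:ℝ)*d)| < ε)).card : ℝ)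
      ≤ 2*ε/d + 1 := by
  set S := (Finset.range N).filter (fun i : ℕ => |x - (a + (i:ℝ)*d)| < ε) with hS
  rcases S.eq_empty_or_nonempty with h | h
  · rw [h]; simp; positivity
  · set m := S.min' h with hm
    have hmS : m ∈ S := S.min'_mem h
    have hsub : S ⊆ Finset.Ico m (m + ⌈2*ε/d⌉₊) := by
      intro i hi
      refine Finset.mem_Ico.mpr ⟨S.min'_le i hi, ?_⟩
      have h1 : |x - (a + (i:ℝ)*d)| < ε := (Finset.mem_filter.mp hi).2
      have h2 : |x - (a + (m:ℝ)*d)| < ε := (Finset.mem_filter.mp hmS).2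
      rw [abs_lt] at h1 h2
      have hle : m ≤ i := S.min'_le i hi
      have h3 : ((i - m : ℕ) : ℝ) < 2*ε/d := by
        rw [Nat.cast_sub hle, lt_div_iff₀ hd]
        nlinarith [h1.1, h1.2, h2.1, h2.2]
      have h4 : i - m < ⌈2*ε/d⌉₊ := Nat.lt_ceil.mpr h3
      omega
    calc (S.card : ℝ) ≤ ((Finset.Ico m (m + ⌈2*ε/d⌉₊)).card : ℝ) := by
          exact_mod_cast Finset.card_le_card hsub
      _ = (⌈2*ε/d⌉₊ : ℝ) := by rw [Nat.card_Ico]; simp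
      _ ≤ 2*ε/d + 1 := (Nat.ceil_lt_add_one (by positivity)).le

end

lemma abs_err_le (N : ℕ) (a x d : ℝ) (hd : 0 < d) :
    |d * ∑ i ∈ Finset.range N, erf ((x - (a + (i:ℝ)*d)) / (Real.sqrt 2 * d))
      - d * ((((Finset.range N).filter (fun i : ℕ => (i:ℝ)*d < x - a)).card : ℝ)
           + (((Finset.range N).filter (fun i : ℕ => (i:ℝ)*d ≤ x - a)).card : ℝ) - (N:ℝ))|
    ≤ 4*Real.sqrt d + 2*d
      + (N:ℝ)*d*(1 - erf (Real.sqrt d / (Real.sqrt 2 * d))) := by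
  set ε := Real.sqrt d with hε
  have hε0 : 0 < ε := Real.sqrt_pos.mpr hd
  set c := Real.sqrt 2 * d with hc
  have hc0 : 0 < c := by positivity
  set q := ε / c with hq
  have herfq : erf q ≤ 1 := erf_le_one q
  set g : ℕ → ℝ := fun i => erf ((x - (a + (i:ℝ)*d)) / c)
    - ((if (i:ℝ)*d < x - a then (1:ℝ) else 0) + (if (i:ℝ)*d ≤ x - a then (1:ℝ) else 0) - 1)
    with hg
  have hrw : d * ∑ i ∈ Finset.range N, erf ((x - (a + (i:ℝ)*d)) / (Real.sqrt 2 * d))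
      - d * ((((Finset.range N).filter (fun i : ℕ => (i:ℝ)*d < x - a)).card : ℝ)
           + (((Finset.range N).filter (fun i : ℕ => (i:ℝ)*d ≤ x - a)).card : ℝ) - (N:ℝ))
      = d * ∑ i ∈ Finset.range N, g i := by
    have e1 : ((((Finset.range N).filter (fun i : ℕ => (i:ℝ)*d < x - a)).card : ℝ))
        = ∑ i ∈ Finset.range N, (if (i:ℝ)*d < x - a then (1:ℝ) else 0) := by
      rw [Finset.sum_boole]
    have e2 : ((((Finset.range N).filter (fun i : ℕ => (i:ℝ)*d ≤ x - a)).card : ℝ))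
        = ∑ i ∈ Finset.range N, (if (i:ℝ)*d ≤ x - a then (1:ℝ) else 0) := by
      rw [Finset.sum_boole]
    rw [e1, e2, hg, Finset.sum_sub_distrib, Finset.sum_sub_distrib, Finset.sum_add_distrib]
    simp only [Finset.sum_const, Finset.card_range, nsmul_eq_mul, mul_one]
    ring
  rw [hrw, abs_mul, abs_of_pos hd]
  have hnear := card_filter_abs_lt N a x d ε hd hε0.le
  set P : ℕ → Prop := fun i => |x - (a + (i:ℝ)*d)| < ε with hP
  have hsplit : ∑ i ∈ Finset.range N, |g i|
      = (∑ i ∈ (Finset.range N).filter P, |g i|)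
      + ∑ i ∈ (Finset.range N).filter (fun i => ¬ P i), |g i| :=
    (Finset.sum_filter_add_sum_filter_not _ _ _).symm
  have hσ : ∀ i : ℕ, -1 ≤ ((if (i:ℝ)*d < x - a then (1:ℝ) else 0)
      + (if (i:ℝ)*d ≤ x - a then (1:ℝ) else 0) - 1)
      ∧ ((if (i:ℝ)*d < x - a then (1:ℝ) else 0)
      + (if (i:ℝ)*d ≤ x - a then (1:ℝ) else 0) - 1) ≤ 1 := by
    intro i
    constructor <;> (split_ifs <;> norm_num)
  have hgabs : ∀ i : ℕ, |g i| ≤ 2 := by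
    intro i
    rw [hg]
    have h1 := neg_one_le_erf ((x - (a + (i:ℝ)*d)) / c)
    have h2 := erf_le_one ((x - (a + (i:ℝ)*d)) / c)
    have h3 := hσ i
    exact abs_le.mpr ⟨by linarith [h3.2], by linarith [h3.1]⟩
  have hb1 : ∑ i ∈ (Finset.range N).filter P, |g i|
      ≤ ((((Finset.range N).filter P).card : ℝ)) * 2 := by
    have := Finset.sum_le_card_nsmul ((Finset.range N).filter P) (fun i => |g i|) 2
      (fun i _ => hgabs i)
    simpa [nsmul_eq_mul] using this
  have hfar : ∀ i ∈ (Finset.range N).filter (fun i => ¬ P i), |g i| ≤ 1 - erf q := by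
    intro i hi
    have hiP : ¬ P i := (Finset.mem_filter.mp hi).2
    simp only [hg]
    have hiP' : ε ≤ |x - (a + (i:ℝ)*d)| := not_lt.mp hiP
    rcases le_abs.mp hiP' with h | h
    · have hlt : (i:ℝ)*d < x - a := by linarith
      rw [if_pos hlt, if_pos hlt.le]
      have ht : q ≤ (x - (a + (i:ℝ)*d)) / c := by
        rw [hq]; gcongr
      have hm := erf_mono ht
      have h2 := erf_le_one ((x - (a + (i:ℝ)*d)) / c)
      rw [abs_of_nonpos (by linarith : erf ((x - (a + (i:ℝ)*d)) / c) - ((1:ℝ) + 1 - 1) ≤ 0)]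
      linarith
    · have hlt : ¬ ((i:ℝ)*d < x - a) := by push_neg; linarith
      have hle : ¬ ((i:ℝ)*d ≤ x - a) := by push_neg; linarith
      rw [if_neg hlt, if_neg hle]
      have ht : (x - (a + (i:ℝ)*d)) / c ≤ -q := by
        rw [hq, ← neg_div]; gcongr; linarith
      have hm := erf_mono ht
      rw [erf_neg] at hm
      have h1 := neg_one_le_erf ((x - (a + (i:ℝ)*d)) / c)
      rw [abs_of_nonneg (by linarith : (0:ℝ) ≤ erf ((x - (a + (i:ℝ)*d)) / c) - ((0:ℝ) + 0 - 1))]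
      linarith
  have hb2 : ∑ i ∈ (Finset.range N).filter (fun i => ¬ P i), |g i|
      ≤ ((((Finset.range N).filter (fun i => ¬ P i)).card : ℝ)) * (1 - erf q) := by
    have := Finset.sum_le_card_nsmul ((Finset.range N).filter (fun i => ¬ P i))
      (fun i => |g i|) (1 - erf q) hfar
    simpa [nsmul_eq_mul] using this
  have hcard2 : ((((Finset.range N).filter (fun i => ¬ P i)).card : ℝ)) ≤ (N:ℝ) := by
    have := Finset.card_filter_le (Finset.range N) (fun i => ¬ P i)
    rw [Finset.card_range] at this
    exact_mod_cast this
  have hb2' : ∑ i ∈ (Finset.range N).filter (fun i => ¬ P i), |g i|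
      ≤ (N:ℝ) * (1 - erf q) :=
    hb2.trans (mul_le_mul_of_nonneg_right hcard2 (by linarith))
  have hb1' : ∑ i ∈ (Finset.range N).filter P, |g i| ≤ (2*ε/d + 1) * 2 :=
    hb1.trans (mul_le_mul_of_nonneg_right hnear (by norm_num))
  have habs : |∑ i ∈ Finset.range N, g i| ≤ (2*ε/d + 1) * 2 + (N:ℝ) * (1 - erf q) := by
    calc |∑ i ∈ Finset.range N, g i| ≤ ∑ i ∈ Finset.range N, |g i| :=
          Finset.abs_sum_le_sum_abs _ _
      _ = _ := hsplit
      _ ≤ _ := add_le_add hb1' hb2'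
  have hkey := mul_le_mul_of_nonneg_left habs hd.le
  have heq : d * ((2*ε/d + 1) * 2 + (N:ℝ) * (1 - erf q))
      = 4*ε + 2*d + (N:ℝ)*d*(1 - erf q) := by
    field_simp
    ring
  linarith

section
variable {a b x : ℝ}

lemma lim_bnd (hab : a < b) :
    Tendsto (fun N : ℕ => 4*Real.sqrt ((b - a)/((N:ℝ)-1)) + 2*((b - a)/((N:ℝ)-1))
      + (N:ℝ)*((b - a)/((N:ℝ)-1))
        * (1 - erf (Real.sqrt ((b - a)/((N:ℝ)-1)) / (Real.sqrt 2 * ((b - a)/((N:ℝ)-1))))))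
      atTop (𝓝 0) := by
  set d : ℕ → ℝ := fun N => (b - a)/((N:ℝ)-1) with hd
  have hd0 : Tendsto d atTop (𝓝 0) := lim_d hab
  have hsq : Tendsto (fun N => Real.sqrt (d N)) atTop (𝓝 0) := by
    have := (Real.continuous_sqrt.tendsto' 0 0 Real.sqrt_zero).comp hd0
    exact this
  have hsq_pos : ∀ᶠ N : ℕ in atTop, 0 < Real.sqrt (d N) := by
    filter_upwards [lim_d_pos hab] with N hdN
    exact Real.sqrt_pos.mpr hdN
  have hq_atTop : Tendsto (fun N => Real.sqrt (d N) / (Real.sqrt 2 * d N)) atTop atTop := by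
    have hinv : Tendsto (fun N => (Real.sqrt (d N))⁻¹) atTop atTop :=
      Tendsto.inv_tendsto_nhdsGT_zero (tendsto_nhdsWithin_iff.mpr ⟨hsq, hsq_pos⟩)
    have h := hinv.const_mul_atTop (show (0:ℝ) < (Real.sqrt 2)⁻¹ by positivity)
    refine h.congr' ?_
    filter_upwards [lim_d_pos hab] with N hdN
    have hs : Real.sqrt (d N) ≠ 0 := ne_of_gt (Real.sqrt_pos.mpr hdN)
    rw [show Real.sqrt 2 * d N = Real.sqrt 2 * (Real.sqrt (d N) * Real.sqrt (d N)) by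
      rw [Real.mul_self_sqrt hdN.le]]
    have hmul : Real.sqrt (d N) * Real.sqrt (d N) = d N := Real.mul_self_sqrt hdN.le
    field_simp
  have herf1 : Tendsto (fun N => erf (Real.sqrt (d N) / (Real.sqrt 2 * d N))) atTop (𝓝 1) :=
    tendsto_erf_atTop.comp hq_atTop
  have h3 : Tendsto (fun N : ℕ => (N:ℝ)*(d N)
      * (1 - erf (Real.sqrt (d N) / (Real.sqrt 2 * d N)))) atTop (𝓝 0) := by
    have := (lim_Nd hab).mul ((tendsto_const_nhds (x := (1:ℝ))).sub herf1)
    simpa using this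
  have := ((hsq.const_mul 4).add (hd0.const_mul 2)).add h3
  simpa using this

lemma lim_C_interior (hab : a < b) (hax : a < x) (hxb : x < b) :
    Tendsto (fun N : ℕ => ((b - a)/((N:ℝ)-1)) * ∑ i ∈ Finset.range N,
        erf ((x - (a + (i:ℝ) * ((b - a)/((N:ℝ)-1)))) / (Real.sqrt 2 * ((b - a)/((N:ℝ)-1)))))
      atTop (𝓝 (2*x - a - b)) := by
  set d : ℕ → ℝ := fun N => (b - a)/((N:ℝ)-1) with hd
  set C : ℕ → ℝ := fun N => d N * ∑ i ∈ Finset.range N,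
      erf ((x - (a + (i:ℝ) * d N)) / (Real.sqrt 2 * d N)) with hC
  set T : ℕ → ℝ := fun N => d N *
      ((((Finset.range N).filter (fun i : ℕ => (i:ℝ) * d N < x - a)).card : ℝ)
       + (((Finset.range N).filter (fun i : ℕ => (i:ℝ) * d N ≤ x - a)).card : ℝ)
       - (N:ℝ)) with hT
  have hTlim : Tendsto T atTop (𝓝 (2*x - a - b)) := lim_T hab hax hxb
  have hElim : Tendsto (fun N => C N - T N) atTop (𝓝 0) := by
    set bnd : ℕ → ℝ := fun N : ℕ => 4*Real.sqrt (d N) + 2*(d N)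
      + (N:ℝ)*(d N) * (1 - erf (Real.sqrt (d N) / (Real.sqrt 2 * d N))) with hbnd
    have hblim : Tendsto bnd atTop (𝓝 0) := lim_bnd hab
    have habs : ∀ᶠ N : ℕ in atTop, |C N - T N| ≤ bnd N := by
      filter_upwards [lim_d_pos hab] with N hdN
      exact abs_err_le N a x (d N) hdN
    have hblimneg : Tendsto (fun N => -bnd N) atTop (𝓝 0) := by simpa using hblim.neg
    refine tendsto_of_tendsto_of_tendsto_of_le_of_le' hblimneg hblim ?_ ?_
    · filter_upwards [habs] with N h
      have := (abs_le.mp h).1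
      simpa using this
    · filter_upwards [habs] with N h
      exact (abs_le.mp h).2
  have := hTlim.add hElim
  rw [add_zero] at this
  refine this.congr fun N => by ring

end


/-- Consistency of the closed-form solutions: as the number `N` of uniformly placed
cells tends to infinity, the SPH solution `u₁^{(N)}(x)` converges to the cell density
solution `u₂(x) = P (G(x, a) − G(x, b))` at every `x ∈ (0, L)` with `x ≠ a`, `x ≠ b`. -/
theorem sph_solution_tendsto_cell_density_solution
    (L a b P : ℝ) (hL : 0 < L) (ha : 0 < a) (hab : a < b) (hbL : b < L) (hP : 0 < P)
    (x : ℝ) (hx : x ∈ Set.Ioo (0 : ℝ) L) (hxa : x ≠ a) (hxb : x ≠ b) :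
    Filter.Tendsto (fun N : ℕ => u1SPH L a b P N x) Filter.atTop
      (nhds (P * (greenG L x a - greenG L x b))) := by
  obtain ⟨hx0, hxL⟩ := hx
  have hdpos : ∀ N : ℕ, 2 ≤ N → (0:ℝ) < (b - a)/((N:ℝ)-1) := by
    intro N hN
    have h1 : (1:ℝ) < (N:ℝ) := by exact_mod_cast Nat.lt_of_lt_of_le one_lt_two hN
    exact div_pos (by linarith) (by linarith)
  have hsle : ∀ N : ℕ, 2 ≤ N → ∀ i ∈ Finset.range N,
      (0:ℝ) ≤ (i:ℝ) * ((b - a)/((N:ℝ)-1)) ∧ (i:ℝ) * ((b - a)/((N:ℝ)-1)) ≤ b - a := by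
    intro N hN i hi
    have hd := hdpos N hN
    have h1 : (1:ℝ) < (N:ℝ) := by exact_mod_cast Nat.lt_of_lt_of_le one_lt_two hN
    have hiN : (i:ℝ) ≤ (N:ℝ) - 1 := by
      rw [Finset.mem_range] at hi
      have : (i:ℝ) + 1 ≤ (N:ℝ) := by exact_mod_cast hi
      linarith
    constructor
    · exact mul_nonneg (Nat.cast_nonneg i) hd.le
    · calc (i:ℝ) * ((b - a)/((N:ℝ)-1)) ≤ ((N:ℝ) - 1) * ((b - a)/((N:ℝ)-1)) :=
          mul_le_mul_of_nonneg_right hiN hd.le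
        _ = b - a := by
          have hne : ((N:ℝ)-1) ≠ 0 := by linarith
          field_simp
  have hA : Tendsto (fun N : ℕ => ((b - a)/((N:ℝ)-1)) * ∑ i ∈ Finset.range N,
      erf ((a + (i:ℝ) * ((b - a)/((N:ℝ)-1))) / (Real.sqrt 2 * ((b - a)/((N:ℝ)-1)))))
      atTop (𝓝 (b - a)) := by
    refine lim_A hab ha (fun N i => a + (i:ℝ) * ((b - a)/((N:ℝ)-1))) ?_
    intro N hN i hi
    have := (hsle N hN i hi).1
    linarith
  have hB : Tendsto (fun N : ℕ => ((b - a)/((N:ℝ)-1)) * ∑ i ∈ Finset.range N,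
      erf ((L - (a + (i:ℝ) * ((b - a)/((N:ℝ)-1)))) / (Real.sqrt 2 * ((b - a)/((N:ℝ)-1)))))
      atTop (𝓝 (b - a)) := by
    refine lim_A hab (show (0:ℝ) < L - b by linarith)
      (fun N i => L - (a + (i:ℝ) * ((b - a)/((N:ℝ)-1)))) ?_
    intro N hN i hi
    have := (hsle N hN i hi).2
    linarith
  have hC : Tendsto (fun N : ℕ => ((b - a)/((N:ℝ)-1)) * ∑ i ∈ Finset.range N,
      erf ((x - (a + (i:ℝ) * ((b - a)/((N:ℝ)-1)))) / (Real.sqrt 2 * ((b - a)/((N:ℝ)-1)))))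
      atTop (𝓝 (2*(max (x-a) 0 - max (x-b) 0) - (b-a))) := by
    rcases lt_or_gt_of_ne hxa with h1 | h1
    · have hmax1 : max (x-a) 0 = 0 := max_eq_right (by linarith)
      have hmax2 : max (x-b) 0 = 0 := max_eq_right (by linarith)
      rw [hmax1, hmax2, show 2*((0:ℝ) - 0) - (b-a) = -(b-a) by ring]
      have h := (lim_A hab (show (0:ℝ) < a - x by linarith)
        (fun N i => (a + (i:ℝ) * ((b - a)/((N:ℝ)-1))) - x) ?_).neg
      · refine h.congr fun N => ?_
        rw [neg_mul_eq_mul_neg, ← Finset.sum_neg_distrib]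
        congr 1
        refine Finset.sum_congr rfl fun i _ => ?_
        rw [show (x - (a + (i:ℝ) * ((b - a)/((N:ℝ)-1)))) / (Real.sqrt 2 * ((b - a)/((N:ℝ)-1)))
          = -(((a + (i:ℝ) * ((b - a)/((N:ℝ)-1))) - x) / (Real.sqrt 2 * ((b - a)/((N:ℝ)-1))))
          by ring, erf_neg]
      · intro N hN i hi
        have := (hsle N hN i hi).1
        linarith
    · rcases lt_or_gt_of_ne hxb with h2 | h2
      · have hmax1 : max (x-a) 0 = x - a := max_eq_left (by linarith)
        have hmax2 : max (x-b) 0 = 0 := max_eq_right (by linarith)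
        rw [hmax1, hmax2, show 2*((x-a) - 0) - (b-a) = 2*x - a - b by ring]
        exact lim_C_interior hab h1 h2
      · have hmax1 : max (x-a) 0 = x - a := max_eq_left (by linarith)
        have hmax2 : max (x-b) 0 = x - b := max_eq_left (by linarith)
        rw [hmax1, hmax2, show 2*((x-a) - (x-b)) - (b-a) = b - a by ring]
        refine lim_A hab (show (0:ℝ) < x - b by linarith)
          (fun N i => x - (a + (i:ℝ) * ((b - a)/((N:ℝ)-1)))) ?_
        intro N hN i hi
        have := (hsle N hN i hi).2
        linarith
  have hcomb := (((hA.const_mul ((x/L-1)/2)).add (hB.const_mul ((x/L)/2))).sub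
    (hC.const_mul (1/2 : ℝ))).const_mul P
  have hval : P * ((x/L-1)/2*(b-a) + (x/L)/2*(b-a)
      - 1/2*(2*(max (x-a) 0 - max (x-b) 0) - (b-a)))
      = P * (greenG L x a - greenG L x b) := by
    simp only [greenG]
    ring
  rw [← hval]
  refine hcomb.congr fun N => ?_
  simp only [u1SPH, mul_sub, mul_add, Finset.sum_add_distrib, Finset.sum_sub_distrib,
    ← Finset.mul_sum]
  ring
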